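/- Let G be a finite graph and for each edge e let A(e) be a nonnegative 2×2 matrix with det A(e) ≤ 0, and define f_e as above. Then for any sign assignment s ∈ {−1,1}^{E(G)}, Σ_{σ ∈ {−1,1}^{V(G)}} Π_{(u,v)∈E(G)} f_e(s_{uv} σ_u σ_v) ≤ Σ_{σ ∈ {−1,1}^{V(G)}} Π_{(u,v)∈E(G)} f_e(−σ_u σ_v). -/
import Mathlib

open scoped Classical

/-- The edge function `f_e : {−1,1} → ℝ` associated to the 2×2 matrix `a e`,
with the sign `+1` encoded by `true` and `−1` by `false`:
`f_e(+1) = a₁₁(e)a₂₂(e)` and `f_e(−1) = a₁₂(e)a₂₁(e)`. -/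
def fe {V : Type} (a : Sym2 V → Matrix (Fin 2) (Fin 2) ℝ) (e : Sym2 V) (b : Bool) : ℝ :=
  if b then a e 0 0 * a e 1 1 else a e 0 1 * a e 1 0

/-- The sign `σ_u σ_v ∈ {−1,1}` of an edge, encoded as a Bool (`true` = `+1`):
it is `+1` exactly when the endpoint signs agree. -/
noncomputable def edgeSign {V : Type} (σ : V → Bool) (e : Sym2 V) : Bool :=
  σ (Quot.out e).1 == σ (Quot.out e).2

/-- Sign of a Bool, `true ↦ 1`, `false ↦ -1`. -/
noncomputable def eps (b : Bool) : ℝ := if b then 1 else -1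

lemma eps_beq (x y : Bool) : eps (x == y) = eps x * eps y := by
  cases x <;> cases y <;> simp [eps]

lemma eps_not (x : Bool) : eps (!x) = -eps x := by cases x <;> simp [eps]

lemma edgeSign_mix {V : Type} (σ τ : V → Bool) (e : Sym2 V) :
    eps (edgeSign σ e) * eps (edgeSign τ e) = eps (edgeSign (fun v => σ v == τ v) e) := by
  simp only [edgeSign, eps_beq]; ring

lemma N_nonneg {V : Type} [Fintype V] (F : Finset (Sym2 V)) :
    0 ≤ ∑ σ : V → Bool, ∏ e ∈ F, eps (edgeSign σ e) := by
  set N : ℝ := ∑ σ : V → Bool, ∏ e ∈ F, eps (edgeSign σ e) with hN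
  have key : N * N = (Fintype.card (V → Bool) : ℝ) * N := by
    rw [hN, Finset.sum_mul_sum]
    have h1 : ∀ σ τ : V → Bool,
        (∏ e ∈ F, eps (edgeSign σ e)) * (∏ e ∈ F, eps (edgeSign τ e))
          = ∏ e ∈ F, eps (edgeSign (fun v => σ v == τ v) e) := by
      intro σ τ
      rw [← Finset.prod_mul_distrib]
      exact Finset.prod_congr rfl fun e _ => edgeSign_mix σ τ e
    have h2 : ∀ σ : V → Bool,
        (∑ τ : V → Bool, ∏ e ∈ F, eps (edgeSign (fun v => σ v == τ v) e)) = N := by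
      intro σ
      rw [hN]
      refine Fintype.sum_bijective (fun τ : V → Bool => fun v => σ v == τ v) ?_ _ _
        (fun τ => rfl)
      apply Function.Involutive.bijective
      intro τ
      funext v
      show (σ v == (σ v == τ v)) = τ v
      cases σ v <;> cases τ v <;> rfl
    calc (∑ σ : V → Bool, ∑ τ : V → Bool,
            (∏ e ∈ F, eps (edgeSign σ e)) * ∏ e ∈ F, eps (edgeSign τ e))
        = ∑ _σ : V → Bool, N := by
          refine Finset.sum_congr rfl fun σ _ => ?_
          rw [← h2 σ]
          exact Finset.sum_congr rfl fun τ _ => h1 σ τ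
      _ = (Fintype.card (V → Bool) : ℝ) * N := by
          rw [Finset.sum_const, Finset.card_univ, nsmul_eq_mul]
  by_contra hneg
  push_neg at hneg
  have hc : (0 : ℝ) ≤ (Fintype.card (V → Bool) : ℝ) := Nat.cast_nonneg _
  nlinarith

lemma S_mono {V : Type} [Fintype V] (E : Finset (Sym2 V)) (c t t' : Sym2 V → ℝ)
    (hc : ∀ e ∈ E, 0 ≤ c e) (ht : ∀ e ∈ E, |t e| ≤ t' e) :
    ∑ σ : V → Bool, ∏ e ∈ E, (c e + eps (edgeSign σ e) * t e)
      ≤ ∑ σ : V → Bool, ∏ e ∈ E, (c e + eps (edgeSign σ e) * t' e) := by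
  have expand : ∀ u : Sym2 V → ℝ,
      (∑ σ : V → Bool, ∏ e ∈ E, (c e + eps (edgeSign σ e) * u e))
        = ∑ F ∈ E.powerset, ((∏ e ∈ F, u e) * (∏ e ∈ E \ F, c e)) *
            (∑ σ : V → Bool, ∏ e ∈ F, eps (edgeSign σ e)) := by
    intro u
    have step : ∀ σ : V → Bool,
        (∏ e ∈ E, (c e + eps (edgeSign σ e) * u e))
          = ∑ F ∈ E.powerset, ((∏ e ∈ F, u e) * (∏ e ∈ E \ F, c e)) *
              (∏ e ∈ F, eps (edgeSign σ e)) := by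
      intro σ
      have := Finset.prod_add (fun e => eps (edgeSign σ e) * u e) c E
      simp only [add_comm] at this ⊢
      rw [this]
      refine Finset.sum_congr rfl fun F _ => ?_
      rw [Finset.prod_mul_distrib]
      ring
    rw [Finset.sum_congr rfl fun σ _ => step σ, Finset.sum_comm]
    refine Finset.sum_congr rfl fun F _ => ?_
    rw [Finset.mul_sum]
  rw [expand t, expand t']
  refine Finset.sum_le_sum fun F hF => ?_
  have hFE : F ⊆ E := Finset.mem_powerset.mp hF
  have hcprod : 0 ≤ ∏ e ∈ E \ F, c e :=
    Finset.prod_nonneg fun e he => hc e (Finset.mem_sdiff.mp he).1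
  have hNn := N_nonneg (V := V) F
  have hprod : (∏ e ∈ F, t e) ≤ ∏ e ∈ F, t' e := by
    calc (∏ e ∈ F, t e) ≤ |∏ e ∈ F, t e| := le_abs_self _
      _ = ∏ e ∈ F, |t e| := Finset.abs_prod _ _
      _ ≤ ∏ e ∈ F, t' e :=
          Finset.prod_le_prod (fun e _ => abs_nonneg _) (fun e he => ht e (hFE he))
  have := mul_le_mul_of_nonneg_right hprod hcprod
  exact mul_le_mul_of_nonneg_right this hNn

theorem det_nonpos_signed_sum_le {V : Type} [Fintype V] (G : SimpleGraph V)
    (a : Sym2 V → Matrix (Fin 2) (Fin 2) ℝ)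
    (hnn : ∀ e ∈ G.edgeFinset, ∀ i j, 0 ≤ a e i j)
    (hdet : ∀ e ∈ G.edgeFinset, a e 0 0 * a e 1 1 - a e 0 1 * a e 1 0 ≤ 0)
    (s : Sym2 V → Bool) :
    ∑ σ : V → Bool, ∏ e ∈ G.edgeFinset, fe a e (s e == edgeSign σ e)
      ≤ ∑ σ : V → Bool, ∏ e ∈ G.edgeFinset, fe a e (!(edgeSign σ e)) := by
  set c : Sym2 V → ℝ := fun e => (fe a e true + fe a e false) / 2 with hcdef
  set d : Sym2 V → ℝ := fun e => (fe a e true - fe a e false) / 2 with hddef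
  have hfe : ∀ e b, fe a e b = c e + eps b * d e := by
    intro e b
    cases b <;> simp [eps, hcdef, hddef] <;> ring
  have hL : ∀ (σ : V → Bool) (e : Sym2 V),
      fe a e (s e == edgeSign σ e)
        = c e + eps (edgeSign σ e) * (eps (s e) * d e) := by
    intro σ e
    rw [hfe, eps_beq]; ring
  have hR : ∀ (σ : V → Bool) (e : Sym2 V),
      fe a e (!(edgeSign σ e)) = c e + eps (edgeSign σ e) * (-d e) := by
    intro σ e
    rw [hfe, eps_not]; ring
  calc (∑ σ : V → Bool, ∏ e ∈ G.edgeFinset, fe a e (s e == edgeSign σ e))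
      = ∑ σ : V → Bool, ∏ e ∈ G.edgeFinset,
          (c e + eps (edgeSign σ e) * (eps (s e) * d e)) := by
        exact Finset.sum_congr rfl fun σ _ =>
          Finset.prod_congr rfl fun e _ => hL σ e
    _ ≤ ∑ σ : V → Bool, ∏ e ∈ G.edgeFinset,
          (c e + eps (edgeSign σ e) * (-d e)) := by
        refine S_mono _ c _ _ ?_ ?_
        · intro e he
          have h1 : 0 ≤ fe a e true := by
            simp only [fe, if_true]
            exact mul_nonneg (hnn e he 0 0) (hnn e he 1 1)
          have h2 : 0 ≤ fe a e false := by
            simp only [fe, if_false]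
            exact mul_nonneg (hnn e he 0 1) (hnn e he 1 0)
          simp only [hcdef]
          linarith
        · intro e he
          have hd : d e ≤ 0 := by
            have := hdet e he
            simp only [hddef, fe, if_true, if_false]
            simp only [Bool.false_eq_true, if_false]
            linarith
          rw [abs_mul]
          have h1 : |eps (s e)| = 1 := by cases s e <;> simp [eps]
          rw [h1, one_mul, abs_of_nonpos hd]
    _ = ∑ σ : V → Bool, ∏ e ∈ G.edgeFinset, fe a e (!(edgeSign σ e)) := by
        exact Finset.sum_congr rfl fun σ _ =>
          Finset.prod_congr rfl fun e _ => (hR σ e).symm
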